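/- Let f : I → (0,1] be continuously differentiable with the derivative of 1/f bounded by M on the interval I. Then the curve γ_f(t) := (1 − f(t))δ₀ + f(t)λ_{[−1,0]} in P₂(ℝ) is Lipschitz continuous with respect to the Wasserstein-2 distance with constant M/√3, i.e., W₂(γ_f(t₁), γ_f(t₂)) ≤ (M/√3)|t₁ − t₂| for all t₁, t₂ ∈ I. -/

import Mathlib

open MeasureTheory

/-- `π` is a coupling of `μ` and `ν`. -/
def IsCoupling {E : Type*} [MeasurableSpace E] (μ ν : Measure E) (π : Measure (E × E)) : Prop :=
  IsProbabilityMeasure π ∧ π.fst = μ ∧ π.snd = ν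

/-- Wasserstein-2 distance (as infimum of quadratic costs over couplings, then square root). -/
noncomputable def W2 {E : Type*} [MeasurableSpace E] [NormedAddCommGroup E]
    (μ ν : Measure E) : ℝ :=
  Real.sqrt (sInf {r | ∃ π : Measure (E × E), IsCoupling μ ν π ∧ r = ∫ p, ‖p.1 - p.2‖ ^ 2 ∂π})

/-- The curve `γ_f(t) = (1 - f(t)) δ₀ + f(t) λ_{[-1,0]}` in `P₂(ℝ)`. -/
noncomputable def gammaCurve (f : ℝ → ℝ) (t : ℝ) : Measure ℝ :=
  ENNReal.ofReal (1 - f t) • Measure.dirac 0 +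
    ENNReal.ofReal (f t) • volume.restrict (Set.Icc (-1 : ℝ) 0)

section Aux
open Set

lemma mapQ (c : ℝ) (hc : c ∈ Set.Ioc (0:ℝ) 1) :
    (volume.restrict (Set.Ioc (0:ℝ) 1)).map (fun s => min (s / c - 1) 0) =
      ENNReal.ofReal (1 - c) • Measure.dirac 0 +
        ENNReal.ofReal c • volume.restrict (Set.Icc (-1 : ℝ) 0) := by
  have hc0 : (0:ℝ) < c := hc.1
  have hQm : Measurable (fun s : ℝ => min (s / c - 1) 0) := by fun_prop
  have hsplit : volume.restrict (Set.Ioc (0:ℝ) 1) =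
      volume.restrict (Set.Ioc (0:ℝ) c) + volume.restrict (Set.Ioc c 1) := by
    rw [← Measure.restrict_union (Set.Ioc_disjoint_Ioc_of_le le_rfl) measurableSet_Ioc,
      Set.Ioc_union_Ioc_eq_Ioc hc0.le hc.2]
  rw [hsplit, Measure.map_add _ _ hQm]
  have h1 : (volume.restrict (Set.Ioc (0:ℝ) c)).map (fun s => min (s / c - 1) 0)
      = ENNReal.ofReal c • volume.restrict (Set.Icc (-1 : ℝ) 0) := by
    have he : (fun s : ℝ => min (s / c - 1) 0) =ᵐ[volume.restrict (Set.Ioc (0:ℝ) c)]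
        (fun s : ℝ => s / c - 1) := by
      filter_upwards [ae_restrict_mem measurableSet_Ioc] with s hs
      have : s / c - 1 ≤ 0 := by
        have := (div_le_one hc0).2 hs.2
        linarith
      simp [min_eq_left this]
    rw [Measure.map_congr he]
    have hpre : (fun s : ℝ => s / c - 1) ⁻¹' Set.Ioc (-1 : ℝ) 0 = Set.Ioc (0:ℝ) c := by
      ext s
      simp only [Set.mem_preimage, Set.mem_Ioc]
      constructor
      · rintro ⟨h1, h2⟩
        constructor
        · have h3 : 0 < s / c := by linarith
          have := mul_pos h3 hc0
          rwa [div_mul_cancel₀ _ hc0.ne'] at this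
        · exact (div_le_one hc0).1 (by linarith)
      · rintro ⟨h1, h2⟩
        constructor
        · have : 0 < s / c := div_pos h1 hc0
          linarith
        · have : s / c ≤ 1 := (div_le_one hc0).2 h2
          linarith
    have hmv : Measure.map (fun s : ℝ => s / c - 1) volume = ENNReal.ofReal c • volume := by
      have : (fun s : ℝ => s / c - 1) = (fun x : ℝ => x + (-1)) ∘ (fun x : ℝ => c⁻¹ * x) := by
        ext x; simp [div_eq_inv_mul]; ring
      rw [this, ← Measure.map_map (by fun_prop) (by fun_prop),
        Real.map_volume_mul_left (by positivity : (c:ℝ)⁻¹ ≠ 0), inv_inv,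
        Measure.map_smul, map_add_right_eq_self volume (-1), abs_of_pos hc0]
    rw [← hpre, ← Measure.restrict_map (by fun_prop) measurableSet_Ioc, hmv,
      Measure.restrict_smul, restrict_Ioc_eq_restrict_Icc]
  have h2 : (volume.restrict (Set.Ioc c 1)).map (fun s => min (s / c - 1) 0)
      = ENNReal.ofReal (1 - c) • Measure.dirac 0 := by
    have he : (fun s : ℝ => min (s / c - 1) 0) =ᵐ[volume.restrict (Set.Ioc c 1)]
        (fun _ : ℝ => (0:ℝ)) := by
      filter_upwards [ae_restrict_mem measurableSet_Ioc] with s hs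
      have : (1:ℝ) ≤ s / c := (one_le_div hc0).2 hs.1.le
      simp [min_eq_right (by linarith : (0:ℝ) ≤ s / c - 1)]
    rw [Measure.map_congr he, Measure.map_const]
    simp [Real.volume_Ioc]
  rw [h1, h2, add_comm]

lemma abs_min_sub_min (a b : ℝ) : |min a 0 - min b 0| ≤ |a - b| := by
  rcases le_total a 0 with ha | ha <;> rcases le_total b 0 with hb | hb
  · simp [min_eq_left ha, min_eq_left hb]
  · rw [min_eq_left ha, min_eq_right hb, sub_zero, abs_of_nonpos ha, abs_sub_comm,
      abs_of_nonneg (by linarith)]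
    linarith
  · rw [min_eq_right ha, min_eq_left hb, zero_sub, abs_neg, abs_of_nonpos hb,
      abs_of_nonneg (by linarith)]
    linarith
  · simp [min_eq_right ha, min_eq_right hb]

end Aux

/-- If `f : I → (0,1]` is continuously differentiable on the interval `I` with the derivative
of `1/f` bounded by `M` on `I`, then `t ↦ γ_f(t)` is Lipschitz in Wasserstein-2 with constant
`M/√3`: `W₂(γ_f(t₁), γ_f(t₂)) ≤ (M/√3)|t₁ - t₂|` for all `t₁, t₂ ∈ I`. -/
theorem gammaCurve_lipschitz (I : Set ℝ) (hI : I.OrdConnected) (f : ℝ → ℝ)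
    (hf : ContDiffOn ℝ 1 f I) (hrange : ∀ t ∈ I, f t ∈ Set.Ioc (0 : ℝ) 1)
    (g' : ℝ → ℝ) (hg : ∀ t ∈ I, HasDerivWithinAt (fun s => (f s)⁻¹) (g' t) I t)
    (M : ℝ) (hM : ∀ t ∈ I, |g' t| ≤ M) :
    ∀ t₁ ∈ I, ∀ t₂ ∈ I,
      W2 (gammaCurve f t₁) (gammaCurve f t₂) ≤ M / Real.sqrt 3 * |t₁ - t₂| := by

  intro t₁ ht₁ t₂ ht₂
  have hM0 : 0 ≤ M := le_trans (abs_nonneg _) (hM t₁ ht₁)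
  have hc₁ := hrange t₁ ht₁
  have hc₂ := hrange t₂ ht₂
  set c₁ := f t₁ with hc1def
  set c₂ := f t₂ with hc2def
  have hc1ne : c₁ ≠ 0 := ne_of_gt hc₁.1
  have hc2ne : c₂ ≠ 0 := ne_of_gt hc₂.1
  -- mean value theorem bound
  have hL : |c₁⁻¹ - c₂⁻¹| ≤ M * |t₁ - t₂| := by
    have := Convex.norm_image_sub_le_of_norm_hasDerivWithin_le hg
      (fun x hx => by simpa [Real.norm_eq_abs] using hM x hx) hI.convex ht₂ ht₁
    simpa [Real.norm_eq_abs] using this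
  set C : ℝ := M * |t₁ - t₂| with hCdef
  have hC0 : 0 ≤ C := mul_nonneg hM0 (abs_nonneg _)
  -- the coupling
  set Q₁ : ℝ → ℝ := fun s => min (s / c₁ - 1) 0 with hQ₁def
  set Q₂ : ℝ → ℝ := fun s => min (s / c₂ - 1) 0 with hQ₂def
  have hQ₁c : Continuous Q₁ := by fun_prop
  have hQ₂c : Continuous Q₂ := by fun_prop
  have hQ₁m : Measurable Q₁ := hQ₁c.measurable
  have hQ₂m : Measurable Q₂ := hQ₂c.measurable
  set μ : Measure ℝ := volume.restrict (Set.Ioc (0:ℝ) 1) with hμdef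
  set π : Measure (ℝ × ℝ) := μ.map (fun s => (Q₁ s, Q₂ s)) with hπdef
  have hpairm : Measurable (fun s => (Q₁ s, Q₂ s)) := hQ₁m.prodMk hQ₂m
  have hprob : IsProbabilityMeasure π := by
    constructor
    rw [hπdef, Measure.map_apply hpairm MeasurableSet.univ]
    simp [hμdef, Real.volume_Ioc]
  have hfst : π.fst = gammaCurve f t₁ := by
    rw [hπdef, Measure.fst_map_prodMk hQ₂m]
    exact mapQ c₁ hc₁
  have hsnd : π.snd = gammaCurve f t₂ := by
    rw [hπdef, Measure.snd_map_prodMk hQ₁m]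
    exact mapQ c₂ hc₂
  -- the cost of this coupling
  have hcost : ∫ p : ℝ × ℝ, ‖p.1 - p.2‖ ^ 2 ∂π ≤ C ^ 2 / 3 := by
    have hπint : ∫ p : ℝ × ℝ, ‖p.1 - p.2‖ ^ 2 ∂π
        = ∫ s in Set.Ioc (0:ℝ) 1, ‖Q₁ s - Q₂ s‖ ^ 2 := by
      rw [hπdef, integral_map hpairm.aemeasurable]
      exact (Continuous.aestronglyMeasurable (by fun_prop))
    rw [hπint]
    have hmono : ∫ s in Set.Ioc (0:ℝ) 1, ‖Q₁ s - Q₂ s‖ ^ 2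
        ≤ ∫ s in Set.Ioc (0:ℝ) 1, C ^ 2 * s ^ 2 := by
      apply setIntegral_mono_on
      · exact Continuous.integrableOn_Ioc (by fun_prop)
      · exact Continuous.integrableOn_Ioc (by fun_prop)
      · exact measurableSet_Ioc
      · intro s hs
        have habs : |Q₁ s - Q₂ s| ≤ C * s := by
          have h1 := abs_min_sub_min (s / c₁ - 1) (s / c₂ - 1)
          have h2 : s / c₁ - 1 - (s / c₂ - 1) = s * (c₁⁻¹ - c₂⁻¹) := by
            field_simp
            ring
          calc |Q₁ s - Q₂ s| ≤ |s / c₁ - 1 - (s / c₂ - 1)| := h1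
            _ = s * |c₁⁻¹ - c₂⁻¹| := by
                rw [h2, abs_mul, abs_of_nonneg hs.1.le]
            _ ≤ s * (M * |t₁ - t₂|) := mul_le_mul_of_nonneg_left hL hs.1.le
            _ = C * s := by rw [hCdef]; ring
        have h0 : (0:ℝ) ≤ C * s := mul_nonneg hC0 hs.1.le
        calc ‖Q₁ s - Q₂ s‖ ^ 2 = |Q₁ s - Q₂ s| ^ 2 := by rw [Real.norm_eq_abs]
          _ ≤ (C * s) ^ 2 := by nlinarith [abs_nonneg (Q₁ s - Q₂ s)]
          _ = C ^ 2 * s ^ 2 := by ring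
    refine hmono.trans (le_of_eq ?_)
    rw [← intervalIntegral.integral_of_le zero_le_one,
      intervalIntegral.integral_const_mul, integral_pow]
    norm_num
    ring
  -- conclude
  have hmem : (∫ p : ℝ × ℝ, ‖p.1 - p.2‖ ^ 2 ∂π) ∈
      {r | ∃ π' : Measure (ℝ × ℝ), IsCoupling (gammaCurve f t₁) (gammaCurve f t₂) π' ∧
        r = ∫ p, ‖p.1 - p.2‖ ^ 2 ∂π'} := ⟨π, ⟨hprob, hfst, hsnd⟩, rfl⟩
  have hbdd : BddBelow {r | ∃ π' : Measure (ℝ × ℝ),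
      IsCoupling (gammaCurve f t₁) (gammaCurve f t₂) π' ∧
      r = ∫ p, ‖p.1 - p.2‖ ^ 2 ∂π'} := by
    refine ⟨0, ?_⟩
    rintro r ⟨π', _, rfl⟩
    exact integral_nonneg fun p => by positivity
  have hinf : sInf {r | ∃ π' : Measure (ℝ × ℝ),
      IsCoupling (gammaCurve f t₁) (gammaCurve f t₂) π' ∧
      r = ∫ p, ‖p.1 - p.2‖ ^ 2 ∂π'} ≤ C ^ 2 / 3 :=
    (csInf_le hbdd hmem).trans hcost
  have hW : W2 (gammaCurve f t₁) (gammaCurve f t₂) ≤ Real.sqrt (C ^ 2 / 3) :=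
    Real.sqrt_le_sqrt hinf
  refine hW.trans (le_of_eq ?_)
  rw [Real.sqrt_div (sq_nonneg C), Real.sqrt_sq hC0, hCdef]
  ring
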